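/- The paper's triangle-density estimate is the exact sum of products of expected-adjacency entries over vertex triples: for a summary S of G (all blocks of size ≥ 2, or blocks of size < 2 having zero internal edges), Σ_{{u,v,x} ⊆ V, u,v,x distinct} Ā(u,v)·Ā(v,x)·Ā(u,x) = Σ_{i=1}^{k} [ C(n_i,3)·π_i³ + Σ_{j=i+1}^{k} ( π_{ij}²·( C(n_i,2)·n_j·π_i + C(n_j,2)·n_i·π_j ) + Σ_{l=j+1}^{k} n_i·n_j·n_l·π_{ij}·π_{jl}·π_{il} ) ], where the left-hand sum is over unordered triples of distinct vertices. -/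

import Mathlib

/-!
Setting: `A : V → V → ℝ` is the (symmetric, 0/1-valued, zero-diagonal) adjacency matrix
of a finite simple undirected graph `G = (V,E)`, and `P : V → Fin k` assigns each vertex
to its block of the partition `{V_1, …, V_k}`.  `π_i = e_i / C(n_i,2)` (interpreted as `0`
when `C(n_i,2) = 0`, which is Lean's division-by-zero convention) and
`π_{ij} = e_{ij}/(n_i n_j)`.  The sum over unordered triples `{u,v,x}` of distinct
vertices of `Ā(u,v)·Ā(v,x)·Ā(u,x)` is written as `1/6` times the corresponding sum over
ordered triples of pairwise-distinct vertices (the summand is symmetric in `u,v,x`).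
-/

open Finset

section Generic
set_option linter.unusedSectionVars false
variable {ι : Type*} [Fintype ι] [LinearOrder ι]
variable {ι : Type*} [Fintype ι] [LinearOrder ι]

lemma sum_lt_swap (f : ι → ι → ℝ) :
    ∑ i : ι, ∑ j ∈ univ.filter (fun j => j < i), f i j
      = ∑ i : ι, ∑ j ∈ univ.filter (fun j => i < j), f j i := by
  simp only [Finset.sum_filter]
  exact Finset.sum_comm

lemma sum_trichotomy (f : ι → ι → ℝ) :
    ∑ i : ι, ∑ j : ι, f i j
      = (∑ i : ι, ∑ j ∈ univ.filter (fun j => j < i), f i j) + (∑ i : ι, f i i)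
        + ∑ i : ι, ∑ j ∈ univ.filter (fun j => i < j), f i j := by
  have key : ∀ i : ι, ∑ j : ι, f i j
      = (∑ j ∈ univ.filter (fun j => j < i), f i j) + f i i
        + ∑ j ∈ univ.filter (fun j => i < j), f i j := by
    intro i
    have : ∀ j : ι, f i j = (if j < i then f i j else 0) + (if j = i then f i j else 0)
        + (if i < j then f i j else 0) := by
      intro j
      rcases lt_trichotomy j i with h | h | h
      · simp [h, h.ne, not_lt_of_gt h]
      · simp [h]
      · simp [h, h.ne', not_lt_of_gt h]
    rw [Finset.sum_congr rfl (fun j _ => this j)]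
    simp [Finset.sum_add_distrib, Finset.sum_filter, Finset.sum_ite_eq']
  rw [Finset.sum_congr rfl (fun i _ => key i), Finset.sum_add_distrib, Finset.sum_add_distrib]

lemma pair_split (f : ι → ι → ℝ) (hsym : ∀ i j, f i j = f j i) :
    ∑ i : ι, ∑ j : ι, f i j
      = ∑ i : ι, f i i + 2 * ∑ i : ι, ∑ j ∈ univ.filter (fun j => i < j), f i j := by
  rw [sum_trichotomy f, sum_lt_swap]
  have : ∑ i : ι, ∑ j ∈ univ.filter (fun j => i < j), f j i
      = ∑ i : ι, ∑ j ∈ univ.filter (fun j => i < j), f i j :=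
    Finset.sum_congr rfl fun i _ => Finset.sum_congr rfl fun j _ => hsym j i
  rw [this]; ring

lemma sum3_swap23 (G : ι → ι → ι → ℝ) :
    ∑ a : ι, ∑ b : ι, ∑ c : ι, G a b c = ∑ a : ι, ∑ c : ι, ∑ b : ι, G a b c :=
  Finset.sum_congr rfl fun _ _ => Finset.sum_comm

lemma sum3_rot (G : ι → ι → ι → ℝ) :
    ∑ a : ι, ∑ b : ι, ∑ c : ι, G a b c = ∑ c : ι, ∑ a : ι, ∑ b : ι, G a b c :=
  (sum3_swap23 G).trans Finset.sum_comm

set_option linter.unusedSectionVars false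

lemma ite_sum_pull {α : Type*} (p : Prop) [Decidable p] (s : Finset α) (g : α → ℝ) :
    (if p then ∑ c ∈ s, g c else 0) = ∑ c ∈ s, if p then g c else 0 := by
  split_ifs <;> simp

lemma triple_split (f : ι → ι → ι → ℝ)
    (h12 : ∀ a b c, f a b c = f b a c) (h23 : ∀ a b c, f a b c = f a c b) :
    ∑ a : ι, ∑ b : ι, ∑ c : ι, f a b c
      = 3 * (∑ a : ι, ∑ b : ι, f a a b) - 2 * (∑ a : ι, f a a a)
        + 6 * ∑ a : ι, ∑ b ∈ univ.filter (fun b => a < b),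
            ∑ c ∈ univ.filter (fun c => b < c), f a b c := by
  set S3 := ∑ a : ι, ∑ b ∈ univ.filter (fun b => a < b),
      ∑ c ∈ univ.filter (fun c => b < c), f a b c with hS3
  -- step 1
  have step1 : ∑ a : ι, ∑ b : ι, ∑ c : ι, f a b c
      = (∑ a : ι, ∑ c : ι, f a a c)
        + 2 * ∑ a : ι, ∑ b ∈ univ.filter (fun b => a < b), ∑ c : ι, f a b c :=
    pair_split (fun a b => ∑ c : ι, f a b c)
      (fun a b => Finset.sum_congr rfl fun c _ => h12 a b c)
  -- 5-way split of the inner sum when a < b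
  have step2 : ∑ a : ι, ∑ b ∈ univ.filter (fun b => a < b), ∑ c : ι, f a b c
      = (∑ a : ι, ∑ b ∈ univ.filter (fun b => a < b),
            ∑ c ∈ univ.filter (fun c => c < a), f a b c)
        + (∑ a : ι, ∑ b ∈ univ.filter (fun b => a < b), f a b a)
        + (∑ a : ι, ∑ b ∈ univ.filter (fun b => a < b),
            ∑ c ∈ univ.filter (fun c => a < c ∧ c < b), f a b c)
        + (∑ a : ι, ∑ b ∈ univ.filter (fun b => a < b), f a b b)
        + (∑ a : ι, ∑ b ∈ univ.filter (fun b => a < b),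
            ∑ c ∈ univ.filter (fun c => b < c), f a b c) := by
    rw [← Finset.sum_add_distrib, ← Finset.sum_add_distrib, ← Finset.sum_add_distrib,
      ← Finset.sum_add_distrib]
    refine Finset.sum_congr rfl fun a _ => ?_
    rw [← Finset.sum_add_distrib, ← Finset.sum_add_distrib, ← Finset.sum_add_distrib,
      ← Finset.sum_add_distrib]
    refine Finset.sum_congr rfl fun b hb => ?_
    have hab : a < b := (Finset.mem_filter.1 hb).2
    have point : ∀ c : ι, f a b c
        = (if c < a then f a b c else 0) + (if c = a then f a b c else 0)
          + (if a < c ∧ c < b then f a b c else 0) + (if c = b then f a b c else 0)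
          + (if b < c then f a b c else 0) := by
      intro c
      rcases lt_trichotomy c a with h1 | rfl | h1
      · have hcb : c < b := h1.trans hab
        simp [h1, h1.ne, asymm h1, hcb.ne, asymm hcb]
      · simp [lt_irrefl, hab.ne, asymm hab]
      · rcases lt_trichotomy c b with h2 | rfl | h2
        · simp [h1, h2, asymm h1, h1.ne', h2.ne, asymm h2]
        · simp [asymm h1, h1.ne', lt_irrefl]
        · simp [h2, asymm h1, h1.ne', asymm h2, h2.ne']
    rw [Finset.sum_congr rfl fun c _ => point c]
    simp [Finset.sum_add_distrib, Finset.sum_filter, Finset.sum_ite_eq']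
  -- A1 = S3
  have hA1 : (∑ a : ι, ∑ b ∈ univ.filter (fun b => a < b),
      ∑ c ∈ univ.filter (fun c => c < a), f a b c) = S3 := by
    have e1 : (∑ a : ι, ∑ b ∈ univ.filter (fun b => a < b),
        ∑ c ∈ univ.filter (fun c => c < a), f a b c)
        = ∑ a : ι, ∑ b : ι, ∑ c : ι,
            if a < b then if c < a then f a b c else 0 else 0 := by
      simp only [Finset.sum_filter, ite_sum_pull]
    rw [e1, sum3_rot]
    rw [hS3]
    simp only [Finset.sum_filter, ite_sum_pull]
    refine Finset.sum_congr rfl fun x _ => Finset.sum_congr rfl fun y _ =>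
      Finset.sum_congr rfl fun z _ => ?_
    split_ifs <;> first | rfl | exact (h23 _ _ _).trans (h12 _ _ _)
  -- A3 = S3
  have hA3 : (∑ a : ι, ∑ b ∈ univ.filter (fun b => a < b),
      ∑ c ∈ univ.filter (fun c => a < c ∧ c < b), f a b c) = S3 := by
    have e1 : (∑ a : ι, ∑ b ∈ univ.filter (fun b => a < b),
        ∑ c ∈ univ.filter (fun c => a < c ∧ c < b), f a b c)
        = ∑ a : ι, ∑ b : ι, ∑ c : ι,
            if a < c then if c < b then f a b c else 0 else 0 := by
      simp only [Finset.sum_filter, ite_sum_pull]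
      refine Finset.sum_congr rfl fun a _ => Finset.sum_congr rfl fun b _ =>
        Finset.sum_congr rfl fun c _ => ?_
      by_cases h1 : a < c
      · by_cases h2 : c < b
        · simp [h1, h2, h1.trans h2]
        · simp [h1, h2]
      · simp [h1]
    rw [e1, sum3_swap23]
    rw [hS3]
    simp only [Finset.sum_filter, ite_sum_pull]
    refine Finset.sum_congr rfl fun x _ => Finset.sum_congr rfl fun y _ =>
      Finset.sum_congr rfl fun z _ => ?_
    split_ifs <;> first | rfl | exact h23 _ _ _
  -- A2 + A4
  have hA2 : (∑ a : ι, ∑ b ∈ univ.filter (fun b => a < b), f a b a)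
      = ∑ a : ι, ∑ b ∈ univ.filter (fun b => a < b), f a a b :=
    Finset.sum_congr rfl fun a _ => Finset.sum_congr rfl fun b _ => h23 a b a
  have hA4 : (∑ a : ι, ∑ b ∈ univ.filter (fun b => a < b), f a b b)
      = ∑ a : ι, ∑ b ∈ univ.filter (fun b => b < a), f a a b := by
    have e1 : (∑ a : ι, ∑ b ∈ univ.filter (fun b => a < b), f a b b)
        = ∑ a : ι, ∑ b ∈ univ.filter (fun b => a < b), (fun i j => f i i j) b a :=
      Finset.sum_congr rfl fun a _ => Finset.sum_congr rfl fun b _ =>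
        (h12 a b b).trans (h23 b a b)
    rw [e1, ← sum_lt_swap (fun i j => f i i j)]
  have htri : (∑ a : ι, ∑ b : ι, f a a b)
      = (∑ a : ι, ∑ b ∈ univ.filter (fun b => b < a), f a a b) + (∑ a : ι, f a a a)
        + ∑ a : ι, ∑ b ∈ univ.filter (fun b => a < b), f a a b :=
    sum_trichotomy (fun a b => f a a b)
  rw [step1, step2, hA1, hA3, hA2, hA4]
  linarith [htri]
end Generic

lemma cast_choose_three (m : ℕ) :
    ((m.choose 3 : ℕ) : ℝ) = (m : ℝ) * ((m : ℝ) - 1) * ((m : ℝ) - 2) / 6 := by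
  induction m with
  | zero => simp
  | succ n ih =>
      have h : (n + 1).choose 3 = n.choose 2 + n.choose 3 := Nat.choose_succ_succ n 2
      rw [h]
      push_cast
      rw [Nat.cast_choose_two, ih]
      push_cast
      ring

/-- `n_i`: the number of vertices in block `i`. -/
def blockCard {V : Type*} [Fintype V] {k : ℕ} (P : V → Fin k) (i : Fin k) : ℕ :=
  (Finset.univ.filter fun v => P v = i).card

/-- `e_i`: the number of edges of `G` with both endpoints in block `i`. -/
noncomputable def eIn {V : Type*} [Fintype V] {k : ℕ} (A : V → V → ℝ) (P : V → Fin k)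
    (i : Fin k) : ℝ :=
  (∑ u ∈ Finset.univ.filter (fun v => P v = i),
      ∑ v ∈ Finset.univ.filter (fun v => P v = i), A u v) / 2

/-- `e_{ij}`: the number of edges of `G` between block `i` and block `j` (for `i ≠ j`). -/
noncomputable def eCross {V : Type*} [Fintype V] {k : ℕ} (A : V → V → ℝ) (P : V → Fin k)
    (i j : Fin k) : ℝ :=
  ∑ u ∈ Finset.univ.filter (fun v => P v = i),
    ∑ v ∈ Finset.univ.filter (fun v => P v = j), A u v

/-- `π_i = e_i / C(n_i,2)`, the internal edge density of block `i`. -/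
noncomputable def piIn {V : Type*} [Fintype V] {k : ℕ} (A : V → V → ℝ) (P : V → Fin k)
    (i : Fin k) : ℝ :=
  eIn A P i / ((blockCard P i).choose 2 : ℝ)

/-- `π_{ij} = e_{ij} / (n_i n_j)`, the cross edge density between blocks `i` and `j`. -/
noncomputable def piCross {V : Type*} [Fintype V] {k : ℕ} (A : V → V → ℝ) (P : V → Fin k)
    (i j : Fin k) : ℝ :=
  eCross A P i j / ((blockCard P i : ℝ) * (blockCard P j : ℝ))

/-- The expected adjacency matrix `Ā` of the summary determined by `P`. -/
noncomputable def Abar {V : Type*} [Fintype V] [DecidableEq V] {k : ℕ}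
    (A : V → V → ℝ) (P : V → Fin k) (u v : V) : ℝ :=
  if u = v then 0
  else if P u = P v then piIn A P (P u)
  else piCross A P (P u) (P v)

section Main
variable {V : Type*} [Fintype V] [DecidableEq V] {k : ℕ}

/-- block density function -/
noncomputable def gD (A : V → V → ℝ) (P : V → Fin k) (a b : Fin k) : ℝ :=
  if a = b then piIn A P a else piCross A P a b

lemma eCross_symm (A : V → V → ℝ) (P : V → Fin k) (hsym : ∀ u v, A u v = A v u)
    (i j : Fin k) : eCross A P i j = eCross A P j i := by
  unfold eCross
  rw [Finset.sum_comm]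
  exact Finset.sum_congr rfl fun u _ => Finset.sum_congr rfl fun v _ => hsym v u

lemma piCross_symm (A : V → V → ℝ) (P : V → Fin k) (hsym : ∀ u v, A u v = A v u)
    (i j : Fin k) : piCross A P i j = piCross A P j i := by
  unfold piCross
  rw [eCross_symm A P hsym, mul_comm]

lemma gD_symm (A : V → V → ℝ) (P : V → Fin k) (hsym : ∀ u v, A u v = A v u)
    (a b : Fin k) : gD A P a b = gD A P b a := by
  unfold gD
  by_cases h : a = b
  · subst h; rfl
  · rw [if_neg h, if_neg (Ne.symm h), piCross_symm A P hsym]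

lemma Abar_eq (A : V → V → ℝ) (P : V → Fin k) (u v : V) :
    Abar A P u v = if u = v then 0 else gD A P (P u) (P v) := rfl

lemma sum_fiber (P : V → Fin k) (f : Fin k → ℝ) :
    ∑ u : V, f (P u) = ∑ a : Fin k, (blockCard P a : ℝ) * f a := by
  rw [← Finset.sum_fiberwise' Finset.univ P f]
  exact Finset.sum_congr rfl fun a _ => by
    rw [Finset.sum_const, nsmul_eq_mul]; rfl

end Main

section Main2
variable {V : Type*} [Fintype V] [DecidableEq V] {k : ℕ}

noncomputable def T3D (A : V → V → ℝ) (P : V → Fin k) : ℝ :=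
  ∑ a : Fin k, ∑ b : Fin k, ∑ c : Fin k,
    (blockCard P a : ℝ) * (blockCard P b : ℝ) * (blockCard P c : ℝ) * gD A P a b * gD A P b c * gD A P a c

noncomputable def P2D (A : V → V → ℝ) (P : V → Fin k) : ℝ :=
  ∑ a : Fin k, ∑ b : Fin k, (blockCard P a : ℝ) * (blockCard P b : ℝ) * gD A P a a * gD A P a b * gD A P a b

noncomputable def P2sqD (A : V → V → ℝ) (P : V → Fin k) : ℝ :=
  ∑ a : Fin k, ∑ b : Fin k, (blockCard P a : ℝ) * (blockCard P a : ℝ) * (blockCard P b : ℝ) * gD A P a a * gD A P a b * gD A P a b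

noncomputable def Q1D (A : V → V → ℝ) (P : V → Fin k) : ℝ :=
  ∑ a : Fin k, (blockCard P a : ℝ) * gD A P a a * gD A P a a * gD A P a a

noncomputable def Q2D (A : V → V → ℝ) (P : V → Fin k) : ℝ :=
  ∑ a : Fin k, (blockCard P a : ℝ) * (blockCard P a : ℝ) * gD A P a a * gD A P a a * gD A P a a

noncomputable def Q3D (A : V → V → ℝ) (P : V → Fin k) : ℝ :=
  ∑ a : Fin k, (blockCard P a : ℝ) * (blockCard P a : ℝ) * (blockCard P a : ℝ) * gD A P a a * gD A P a a * gD A P a a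

lemma lhs_eq (A : V → V → ℝ) (P : V → Fin k) (hsym : ∀ u v, A u v = A v u) :
    ∑ u : V, ∑ v : V, ∑ x : V, Abar A P u v * Abar A P v x * Abar A P u x
      = T3D A P - 3 * P2D A P + 2 * Q1D A P := by
  have hg : ∀ a b, gD A P a b = gD A P b a := gD_symm A P hsym
  set g := gD A P with hgdef
  set G : V → V → V → ℝ :=
    fun u v x => g (P u) (P v) * g (P v) (P x) * g (P u) (P x) with hG
  have key : ∀ u v x : V, Abar A P u v * Abar A P v x * Abar A P u x
      = G u v x - (if u = v then G u v x else 0) - (if v = x then G u v x else 0)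
        - (if u = x then G u v x else 0)
        + (if u = v then if v = x then 2 * G u v x else 0 else 0) := by
    intro u v x
    simp only [Abar_eq, hG]
    by_cases h1 : u = v
    · subst h1
      by_cases h2 : u = x
      · subst h2; simp; ring
      · simp [h2]
    · by_cases h2 : v = x
      · subst h2
        simp [h1]
      · by_cases h3 : u = x
        · subst h3
          simp [h1, h2]
        · simp [h1, h2, h3, hgdef]
  have expand : ∑ u : V, ∑ v : V, ∑ x : V, Abar A P u v * Abar A P v x * Abar A P u x
      = (∑ u : V, ∑ v : V, ∑ x : V, G u v x)
        - (∑ u : V, ∑ v : V, ∑ x : V, if u = v then G u v x else 0)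
        - (∑ u : V, ∑ v : V, ∑ x : V, if v = x then G u v x else 0)
        - (∑ u : V, ∑ v : V, ∑ x : V, if u = x then G u v x else 0)
        + (∑ u : V, ∑ v : V, ∑ x : V,
            if u = v then if v = x then 2 * G u v x else 0 else 0) := by
    rw [Finset.sum_congr rfl fun u _ => Finset.sum_congr rfl fun v _ =>
      Finset.sum_congr rfl fun x _ => key u v x]
    simp [Finset.sum_sub_distrib, Finset.sum_add_distrib]
  have sum1 : (∑ u : V, ∑ v : V, ∑ x : V, if u = v then G u v x else 0)
      = ∑ u : V, ∑ x : V, G u u x := by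
    refine Finset.sum_congr rfl fun u _ => ?_
    rw [Finset.sum_comm]
    exact Finset.sum_congr rfl fun x _ => by simp
  have sum2 : (∑ u : V, ∑ v : V, ∑ x : V, if v = x then G u v x else 0)
      = ∑ u : V, ∑ v : V, G u v v :=
    Finset.sum_congr rfl fun u _ => Finset.sum_congr rfl fun v _ => by simp
  have sum3 : (∑ u : V, ∑ v : V, ∑ x : V, if u = x then G u v x else 0)
      = ∑ u : V, ∑ v : V, G u v u :=
    Finset.sum_congr rfl fun u _ => Finset.sum_congr rfl fun v _ => by simp
  have sum4 : (∑ u : V, ∑ v : V, ∑ x : V,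
      if u = v then if v = x then 2 * G u v x else 0 else 0)
      = ∑ u : V, 2 * G u u u := by
    refine Finset.sum_congr rfl fun u _ => ?_
    have h1 : ∀ v : V, (∑ x : V, if u = v then if v = x then 2 * G u v x else 0 else 0)
        = if u = v then 2 * G u v v else 0 := by
      intro v; by_cases h : u = v <;> simp [h]
    rw [Finset.sum_congr rfl fun v _ => h1 v]
    simp
  -- reduce the two-variable sums to a common form
  have c2 : (∑ u : V, ∑ v : V, G u v v) = ∑ u : V, ∑ x : V, G u u x := by
    have pt : ∀ u v : V, G u v v
        = g (P v) (P v) * g (P v) (P u) * g (P v) (P u) := by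
      intro u v
      simp only [hG]
      rw [hg (P u) (P v)]
      ring
    rw [Finset.sum_congr rfl fun u _ => Finset.sum_congr rfl fun v _ => pt u v,
      Finset.sum_comm]
  have c3 : (∑ u : V, ∑ v : V, G u v u) = ∑ u : V, ∑ x : V, G u u x := by
    refine Finset.sum_congr rfl fun u _ => Finset.sum_congr rfl fun v _ => ?_
    simp only [hG]
    rw [hg (P v) (P u)]
    ring
  -- fiberwise evaluations
  have fibD : (∑ u : V, 2 * G u u u) = 2 * Q1D A P := by
    refine Eq.trans (sum_fiber P (fun a => 2 * (g a a * g a a * g a a))) ?_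
    rw [Q1D, Finset.mul_sum]
    exact Finset.sum_congr rfl fun a _ => by rw [hgdef]; ring
  have fibC : (∑ u : V, ∑ x : V, G u u x) = P2D A P := by
    have inner : ∀ u : V, (∑ x : V, G u u x)
        = ∑ c : Fin k, (blockCard P c : ℝ) * (g (P u) (P u) * g (P u) c * g (P u) c) := by
      intro u
      exact sum_fiber P (fun c => g (P u) (P u) * g (P u) c * g (P u) c)
    rw [Finset.sum_congr rfl fun u _ => inner u]
    refine Eq.trans (sum_fiber P
      (fun a => ∑ c : Fin k, (blockCard P c : ℝ) * (g a a * g a c * g a c))) ?_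
    rw [P2D]
    refine Finset.sum_congr rfl fun a _ => ?_
    rw [Finset.mul_sum]
    exact Finset.sum_congr rfl fun c _ => by rw [hgdef]; ring
  have fibT : (∑ u : V, ∑ v : V, ∑ x : V, G u v x) = T3D A P := by
    have inner : ∀ u v : V, (∑ x : V, G u v x)
        = ∑ c : Fin k, (blockCard P c : ℝ) * (g (P u) (P v) * g (P v) c * g (P u) c) := by
      intro u v
      exact sum_fiber P (fun c => g (P u) (P v) * g (P v) c * g (P u) c)
    rw [Finset.sum_congr rfl fun u _ => Finset.sum_congr rfl fun v _ => inner u v]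
    have mid : ∀ u : V, (∑ v : V, ∑ c : Fin k,
        (blockCard P c : ℝ) * (g (P u) (P v) * g (P v) c * g (P u) c))
        = ∑ b : Fin k, (blockCard P b : ℝ) * ∑ c : Fin k,
            (blockCard P c : ℝ) * (g (P u) b * g b c * g (P u) c) := by
      intro u
      exact sum_fiber P (fun b => ∑ c : Fin k, (blockCard P c : ℝ) * (g (P u) b * g b c * g (P u) c))
    rw [Finset.sum_congr rfl fun u _ => mid u]
    refine Eq.trans (sum_fiber P (fun a => ∑ b : Fin k, (blockCard P b : ℝ) * ∑ c : Fin k,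
      (blockCard P c : ℝ) * (g a b * g b c * g a c))) ?_
    rw [T3D]
    refine Finset.sum_congr rfl fun a _ => ?_
    rw [Finset.mul_sum]
    refine Finset.sum_congr rfl fun b _ => ?_
    rw [Finset.mul_sum, Finset.mul_sum]
    exact Finset.sum_congr rfl fun c _ => by rw [hgdef]; ring
  rw [expand, sum1, sum2, sum3, sum4, c2, c3, fibD, fibC, fibT]
  ring

end Main2

section Main3
variable {V : Type*} [Fintype V] [DecidableEq V] {k : ℕ}

lemma rhs_eq (A : V → V → ℝ) (P : V → Fin k) (hsym : ∀ u v, A u v = A v u) :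
    ∑ i : Fin k,
        (((blockCard P i).choose 3 : ℝ) * (piIn A P i) ^ 3
          + ∑ j ∈ Finset.univ.filter (fun j : Fin k => i < j),
              ((piCross A P i j) ^ 2 *
                  (((blockCard P i).choose 2 : ℝ) * (blockCard P j : ℝ) * piIn A P i
                    + ((blockCard P j).choose 2 : ℝ) * (blockCard P i : ℝ) * piIn A P j)
                + ∑ l ∈ Finset.univ.filter (fun l : Fin k => j < l),
                    (blockCard P i : ℝ) * (blockCard P j : ℝ) * (blockCard P l : ℝ)
                      * piCross A P i j * piCross A P j l * piCross A P i l))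
      = T3D A P / 6 - P2D A P / 2 + Q1D A P / 3 := by
  have hg : ∀ a b, gD A P a b = gD A P b a := gD_symm A P hsym
  have hgd : ∀ i, piIn A P i = gD A P i i := fun i => (if_pos rfl).symm
  have hgc : ∀ i j : Fin k, i ≠ j → piCross A P i j = gD A P i j :=
    fun i j h => (if_neg h).symm
  set g := gD A P with hgdef
  set nn : Fin k → ℝ := fun i => (blockCard P i : ℝ) with hnn
  -- the symmetric extensions
  set X : Fin k → Fin k → ℝ := fun i j =>
    g i j ^ 2 * (((blockCard P i).choose 2 : ℝ) * nn j * g i i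
      + ((blockCard P j).choose 2 : ℝ) * nn i * g j j) with hX
  set Y : Fin k → Fin k → Fin k → ℝ := fun a b c =>
    nn a * nn b * nn c * g a b * g b c * g a c with hY
  -- convert the goal's summand to g-form
  have conv : ∀ i : Fin k,
      (((blockCard P i).choose 3 : ℝ) * (piIn A P i) ^ 3
        + ∑ j ∈ Finset.univ.filter (fun j : Fin k => i < j),
            ((piCross A P i j) ^ 2 *
                (((blockCard P i).choose 2 : ℝ) * (blockCard P j : ℝ) * piIn A P i
                  + ((blockCard P j).choose 2 : ℝ) * (blockCard P i : ℝ) * piIn A P j)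
              + ∑ l ∈ Finset.univ.filter (fun l : Fin k => j < l),
                  (blockCard P i : ℝ) * (blockCard P j : ℝ) * (blockCard P l : ℝ)
                    * piCross A P i j * piCross A P j l * piCross A P i l))
      = ((blockCard P i).choose 3 : ℝ) * (g i i) ^ 3
        + (∑ j ∈ Finset.univ.filter (fun j : Fin k => i < j), X i j)
        + ∑ j ∈ Finset.univ.filter (fun j : Fin k => i < j),
            ∑ l ∈ Finset.univ.filter (fun l : Fin k => j < l), Y i j l := by
    intro i
    rw [add_assoc, ← Finset.sum_add_distrib]
    refine congrArg₂ (· + ·) (by rw [hgd i]) ?_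
    refine Finset.sum_congr rfl fun j hj => ?_
    have hij : i < j := (Finset.mem_filter.1 hj).2
    refine congrArg₂ (· + ·) ?_ ?_
    · rw [hgc i j hij.ne, hgd i, hgd j, hX]
    · refine Finset.sum_congr rfl fun l hl => ?_
      have hjl : j < l := (Finset.mem_filter.1 hl).2
      rw [hgc i j hij.ne, hgc j l hjl.ne, hgc i l (hij.trans hjl).ne, hY]
  rw [Finset.sum_congr rfl fun i _ => conv i]
  rw [Finset.sum_add_distrib, Finset.sum_add_distrib]
  -- evaluate the three pieces
  have hXsymm : ∀ i j, X i j = X j i := by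
    intro i j; rw [hX]; simp only; rw [hg i j]; ring
  have hR2 : 2 * (∑ i : Fin k, ∑ j ∈ Finset.univ.filter (fun j : Fin k => i < j), X i j)
      = (∑ i : Fin k, ∑ j : Fin k, X i j) - ∑ i : Fin k, X i i := by
    rw [pair_split X hXsymm]; ring
  have hY12 : ∀ a b c, Y a b c = Y b a c := by
    intro a b c; rw [hY]; simp only; rw [hg a b]; ring
  have hY23 : ∀ a b c, Y a b c = Y a c b := by
    intro a b c; rw [hY]; simp only; rw [hg b c]; ring
  have hR3 : 6 * (∑ i : Fin k, ∑ j ∈ Finset.univ.filter (fun j : Fin k => i < j),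
        ∑ l ∈ Finset.univ.filter (fun l : Fin k => j < l), Y i j l)
      = (∑ a : Fin k, ∑ b : Fin k, ∑ c : Fin k, Y a b c)
        - 3 * (∑ a : Fin k, ∑ b : Fin k, Y a a b) + 2 * ∑ a : Fin k, Y a a a := by
    rw [triple_split Y hY12 hY23]; ring
  -- identify the full sums with the atoms
  have idT3 : (∑ a : Fin k, ∑ b : Fin k, ∑ c : Fin k, Y a b c) = T3D A P := by
    rw [T3D]
  have idW : (∑ a : Fin k, ∑ b : Fin k, Y a a b) = P2sqD A P := by
    rw [P2sqD]
  have idQ3 : (∑ a : Fin k, Y a a a) = Q3D A P := by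
    rw [Q3D]
  -- the double sum of X
  have idX2 : (∑ i : Fin k, ∑ j : Fin k, X i j) = P2sqD A P - P2D A P := by
    have swap : (∑ i : Fin k, ∑ j : Fin k,
        g i j ^ 2 * (((blockCard P j).choose 2 : ℝ) * nn i * g j j))
        = ∑ i : Fin k, ∑ j : Fin k,
            g i j ^ 2 * (((blockCard P i).choose 2 : ℝ) * nn j * g i i) := by
      rw [Finset.sum_comm]
      exact Finset.sum_congr rfl fun i _ => Finset.sum_congr rfl fun j _ => by
        rw [hg i j]
    have expand : (∑ i : Fin k, ∑ j : Fin k, X i j)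
        = 2 * ∑ i : Fin k, ∑ j : Fin k,
            g i j ^ 2 * (((blockCard P i).choose 2 : ℝ) * nn j * g i i) := by
      rw [two_mul]
      nth_rewrite 2 [← swap]
      rw [← Finset.sum_add_distrib]
      refine Finset.sum_congr rfl fun i _ => ?_
      rw [← Finset.sum_add_distrib]
      exact Finset.sum_congr rfl fun j _ => by rw [hX]; ring
    rw [expand, P2sqD, P2D, ← Finset.sum_sub_distrib, Finset.mul_sum]
    refine Finset.sum_congr rfl fun i _ => ?_
    rw [← Finset.sum_sub_distrib, Finset.mul_sum]
    refine Finset.sum_congr rfl fun j _ => ?_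
    simp only [hnn, hgdef, Nat.cast_choose_two]
    ring
  have idXd : (∑ i : Fin k, X i i) = Q3D A P - Q2D A P := by
    rw [Q3D, Q2D, ← Finset.sum_sub_distrib]
    refine Finset.sum_congr rfl fun i _ => ?_
    simp only [hX, hnn, hgdef, Nat.cast_choose_two]
    ring
  have idR1 : 6 * (∑ i : Fin k, ((blockCard P i).choose 3 : ℝ) * (g i i) ^ 3)
      = Q3D A P - 3 * Q2D A P + 2 * Q1D A P := by
    rw [Q3D, Q2D, Q1D, Finset.mul_sum, Finset.mul_sum, Finset.mul_sum,
      ← Finset.sum_sub_distrib, ← Finset.sum_add_distrib]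
    refine Finset.sum_congr rfl fun i _ => ?_
    simp only [hgdef, cast_choose_three]
    ring
  linarith [hR2, hR3, idT3, idW, idQ3, idX2, idXd, idR1]

end Main3

/-- The paper's triangle-density estimate is the exact sum of products of
expected-adjacency entries over unordered triples of distinct vertices. -/
theorem triangle_estimate_closed_form {V : Type*} [Fintype V] [DecidableEq V] {k : ℕ}
    (A : V → V → ℝ) (P : V → Fin k)
    (hsym : ∀ u v, A u v = A v u)
    (h01 : ∀ u v, A u v = 0 ∨ A u v = 1)
    (hdiag : ∀ u, A u u = 0)
    (hnd : ∀ i : Fin k, eIn A P i ≠ 0 → 2 ≤ blockCard P i) :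
    (1 / 6 : ℝ) * ∑ u : V, ∑ v ∈ Finset.univ.erase u, ∑ x ∈ (Finset.univ.erase u).erase v,
        Abar A P u v * Abar A P v x * Abar A P u x
      = ∑ i : Fin k,
          (((blockCard P i).choose 3 : ℝ) * (piIn A P i) ^ 3
            + ∑ j ∈ Finset.univ.filter (fun j : Fin k => i < j),
                ((piCross A P i j) ^ 2 *
                    (((blockCard P i).choose 2 : ℝ) * (blockCard P j : ℝ) * piIn A P i
                      + ((blockCard P j).choose 2 : ℝ) * (blockCard P i : ℝ) * piIn A P j)
                  + ∑ l ∈ Finset.univ.filter (fun l : Fin k => j < l),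
                      (blockCard P i : ℝ) * (blockCard P j : ℝ) * (blockCard P l : ℝ)
                        * piCross A P i j * piCross A P j l * piCross A P i l)) := by
  have hL0 : (∑ u : V, ∑ v ∈ Finset.univ.erase u, ∑ x ∈ (Finset.univ.erase u).erase v,
      Abar A P u v * Abar A P v x * Abar A P u x)
      = ∑ u : V, ∑ v : V, ∑ x : V, Abar A P u v * Abar A P v x * Abar A P u x := by
    refine Finset.sum_congr rfl fun u _ => ?_
    have inner : ∀ v : V, (∑ x ∈ (Finset.univ.erase u).erase v,
        Abar A P u v * Abar A P v x * Abar A P u x)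
        = ∑ x : V, Abar A P u v * Abar A P v x * Abar A P u x := by
      intro v
      refine Finset.sum_subset (Finset.subset_univ _) fun x _ hx => ?_
      have hxe : x = v ∨ x = u := by
        by_contra hc
        push_neg at hc
        exact hx (Finset.mem_erase.2 ⟨hc.1, Finset.mem_erase.2 ⟨hc.2, Finset.mem_univ x⟩⟩)
      rcases hxe with rfl | rfl <;> simp [Abar]
    rw [Finset.sum_congr rfl fun v _ => inner v]
    refine Finset.sum_subset (Finset.subset_univ _) fun v _ hv => ?_
    have hvu : v = u := by
      by_contra hc
      exact hv (Finset.mem_erase.2 ⟨hc, Finset.mem_univ v⟩)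
    subst hvu
    exact Finset.sum_eq_zero fun x _ => by simp [Abar]
  have hfull : (∑ u : V, ∑ v ∈ Finset.univ.erase u, ∑ x ∈ (Finset.univ.erase u).erase v,
      Abar A P u v * Abar A P v x * Abar A P u x)
      = T3D A P - 3 * P2D A P + 2 * Q1D A P := hL0.trans (lhs_eq A P hsym)
  rw [hfull, rhs_eq A P hsym]
  ring
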